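/- Let Ω ⊆ ℝⁿ be an open bounded set, let p ≥ 2, and let σ₁, σ₂ : Ω × [0,∞) → ℝ satisfy (H1)–(H4) (same exponent p) with σ₁(x,E) ≤ σ₂(x,E) for a.e. x ∈ Ω and all E > 0. Let φ_f : ℝⁿ → ℝ be weakly differentiable with ∇φ_f ∈ L^p(Ω) (an extension of the boundary datum f), let A be a set of weakly differentiable functions with gradients in L^p(Ω), and for i = 1,2 and each α ∈ [0,1] let u_i^α minimize F_{σᵢ} over the translated class A_α := {v + α·φ_f : v ∈ A}. Define the power products P_i(α) := ∫_Ω σᵢ(x,|∇u_i^α(x)|) ∇u_i^α(x)·∇φ_f(x) dx. Assume (i) F_{σᵢ}(u_i^0) = 0 for i = 1,2; (ii) for each i the map g_i : α ↦ F_{σᵢ}(u_i^α) is differentiable at every α ∈ [0,1] with g_i'(α) = P_i(α), and P_i is interval-integrable on [0,1]. Then ∫₀¹ P₁(α) dα ≤ ∫₀¹ P₂(α) dα. (Theorem 4.3, Monotonicity Principle for the Average Dirichlet-to-Neumann operator: σ₁ ≤ σ₂ implies ⟨Λ̄_{σ₁}(f), f⟩ ≤ ⟨Λ̄_{σ₂}(f),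 f⟩, stated with the boundary pairings rewritten as interior integrals.) -/

import Mathlib

open MeasureTheory Set
open scoped RealInnerProductSpace

/-- The Dirichlet energy density `Q_σ(x,E) = ∫₀^E σ(x,ξ)·ξ dξ`. -/
noncomputable def dirichletDensity {n : ℕ}
    (σ : EuclideanSpace ℝ (Fin n) → ℝ → ℝ) (x : EuclideanSpace ℝ (Fin n)) (E : ℝ) : ℝ :=
  ∫ ξ in (0:ℝ)..E, σ x ξ * ξ

/-- The Dirichlet energy `F_σ(u) = ∫_Ω Q_σ(x,|∇u(x)|) dx`. -/
noncomputable def dirichletEnergy {n : ℕ} (Ω : Set (EuclideanSpace ℝ (Fin n)))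
    (σ : EuclideanSpace ℝ (Fin n) → ℝ → ℝ) (u : EuclideanSpace ℝ (Fin n) → ℝ) : ℝ :=
  ∫ x in Ω, dirichletDensity σ x ‖gradient u x‖

/-- The power product `⟨Λ_σ(g), f⟩` written as an interior integral:
`∫_Ω σ(x,|∇u|) ∇u·∇φ_f dx`. -/
noncomputable def powerProduct {n : ℕ} (Ω : Set (EuclideanSpace ℝ (Fin n)))
    (σ : EuclideanSpace ℝ (Fin n) → ℝ → ℝ)
    (φf u : EuclideanSpace ℝ (Fin n) → ℝ) : ℝ :=
  ∫ x in Ω, σ x ‖gradient u x‖ * ⟪gradient u x, gradient φf x⟫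

open scoped ENNReal

lemma rpow_helper {E E₀ p : ℝ} (hE : 0 ≤ E) (hE₀ : 0 < E₀) (hp : 2 ≤ p) :
    (E / E₀) ^ (p - 2) * (E * E) = E ^ p / E₀ ^ (p - 2) := by
  rcases eq_or_lt_of_le hE with h0 | h0
  · rw [← h0]
    simp [Real.zero_rpow (show p ≠ 0 by linarith)]
  · rw [Real.div_rpow hE hE₀.le]
    have h2 : E * E = E ^ (2:ℝ) := by
      rw [show ((2:ℝ) = ((2:ℕ):ℝ)) by norm_num, Real.rpow_natCast]; ring
    rw [div_mul_eq_mul_div, h2, ← Real.rpow_add h0]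
    ring_nf

lemma energy_mono {n : ℕ} (Ω : Set (EuclideanSpace ℝ (Fin n)))
    (hΩb : Bornology.IsBounded Ω)
    (p : ℝ) (hp : 2 ≤ p)
    (σ₁ σ₂ : EuclideanSpace ℝ (Fin n) → ℝ → ℝ)
    (hσ₂meas : ∀ E : ℝ, 0 ≤ E → AEMeasurable (fun x => σ₂ x E) (volume.restrict Ω))
    (hσ₁cont : ∀ᵐ x ∂(volume.restrict Ω), ContinuousOn (fun E => σ₁ x E) (Set.Ici 0))
    (hσ₂cont : ∀ᵐ x ∂(volume.restrict Ω), ContinuousOn (fun E => σ₂ x E) (Set.Ici 0))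
    (hσ₁growth : ∃ σl σu E₀ : ℝ, 0 < σl ∧ σl ≤ σu ∧ 0 < E₀ ∧
      ∀ᵐ x ∂(volume.restrict Ω), ∀ E > (0:ℝ),
        σl * (E / E₀) ^ (p - 2) ≤ σ₁ x E ∧ σ₁ x E ≤ σu * max 1 ((E / E₀) ^ (p - 2)))
    (hσ₂growth : ∃ σl σu E₀ : ℝ, 0 < σl ∧ σl ≤ σu ∧ 0 < E₀ ∧
      ∀ᵐ x ∂(volume.restrict Ω), ∀ E > (0:ℝ),
        σl * (E / E₀) ^ (p - 2) ≤ σ₂ x E ∧ σ₂ x E ≤ σu * max 1 ((E / E₀) ^ (p - 2)))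
    (hle : ∀ᵐ x ∂(volume.restrict Ω), ∀ E > (0:ℝ), σ₁ x E ≤ σ₂ x E)
    (u : EuclideanSpace ℝ (Fin n) → ℝ)
    (hu : MemLp (fun x => gradient u x) (ENNReal.ofReal p) (volume.restrict Ω)) :
    dirichletEnergy Ω σ₁ u ≤ dirichletEnergy Ω σ₂ u := by
  classical
  obtain ⟨σl₁, σu₁, E₁, hσl₁, hσlu₁, hE₁, hgr₁⟩ := hσ₁growth
  obtain ⟨σl₂, σu₂, E₀, hσl₂, hσlu₂, hE₀, hgr₂⟩ := hσ₂growth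
  set μ := volume.restrict Ω with hμdef
  have hμfin : IsFiniteMeasure μ := ⟨by rw [hμdef, Measure.restrict_apply_univ]; exact hΩb.measure_lt_top⟩
  -- measurable modifications at rational levels
  have hmk : ∀ q : ℚ, ∃ G : EuclideanSpace ℝ (Fin n) → ℝ, Measurable G ∧
      ∀ᵐ x ∂μ, σ₂ x (max (q:ℝ) 0) = G x := fun q => by
    have h := hσ₂meas (max (q:ℝ) 0) (le_max_right _ _)
    exact ⟨h.mk _, h.measurable_mk, h.ae_eq_mk⟩
  choose G hGmeas hGeq using hmk
  set S : Set (EuclideanSpace ℝ (Fin n)) :=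
    {x | ¬ ContinuousOn (fun E => σ₂ x E) (Set.Ici 0)} ∪
      ⋃ q : ℚ, {x | σ₂ x (max (q:ℝ) 0) ≠ G q x} with hSdef
  have hS : μ S = 0 := by
    apply measure_union_null
    · exact hσ₂cont
    · exact measure_iUnion_null fun q => (hGeq q)
  set N := toMeasurable μ S with hNdef
  have hNmeas : MeasurableSet N := measurableSet_toMeasurable μ S
  have hNnull : μ N = 0 := by rw [hNdef, measure_toMeasurable]; exact hS
  have hSN : S ⊆ N := subset_toMeasurable μ S
  set σt : EuclideanSpace ℝ (Fin n) → ℝ → ℝ :=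
    fun x E => if x ∈ N then 0 else σ₂ x (max E 0) with hσtdef
  -- continuity of the modification
  have hcontt : ∀ x, Continuous fun E => σt x E := by
    intro x
    by_cases hx : x ∈ N
    · simpa [hσtdef, hx] using continuous_const
    · have hc : ContinuousOn (fun E => σ₂ x E) (Set.Ici 0) := by
        by_contra h
        exact hx (hSN (Or.inl h))
      have : Continuous fun E : ℝ => σ₂ x (max E 0) :=
        hc.comp_continuous (continuous_id.max continuous_const) fun E => le_max_right E 0
      simpa [hσtdef, hx] using this
  -- measurability at rational levels
  have hmeasq : ∀ q : ℚ, Measurable fun x => σt x (q : ℝ) := by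
    intro q
    have heq : (fun x => σt x (q:ℝ)) = fun x => if x ∈ N then 0 else G q x := by
      funext x
      by_cases hx : x ∈ N
      · simp [hσtdef, hx]
      · have hxS : x ∉ S := fun h => hx (hSN h)
        have h2 : σ₂ x (max (q:ℝ) 0) = G q x := by
          by_contra h
          exact hxS (Or.inr (mem_iUnion.mpr ⟨q, h⟩))
        simp [hσtdef, hx, h2]
    rw [heq]
    exact Measurable.ite hNmeas measurable_const (hGmeas q)
  -- measurability at all levels
  have hmeasE : ∀ E : ℝ, Measurable fun x => σt x E := by
    intro E
    have hEcl : E ∈ closure (Set.range ((↑) : ℚ → ℝ)) := (Rat.denseRange_cast (𝕜 := ℝ)) E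
    obtain ⟨v, hv_mem, hv_tendsto⟩ := mem_closure_iff_seq_limit.mp hEcl
    choose q hq using hv_mem
    apply measurable_of_tendsto_metrizable (f := fun k x => σt x (v k))
    · intro k
      rw [show (fun x => σt x (v k)) = fun x => σt x ((q k : ℝ)) by rw [hq k]]
      exact hmeasq (q k)
    · rw [tendsto_pi_nhds]
      intro x
      exact ((hcontt x).tendsto E).comp hv_tendsto
  -- joint measurability
  have hjoint : Measurable (Function.uncurry fun (E : ℝ) (x : EuclideanSpace ℝ (Fin n)) => σt x E) :=
    measurable_uncurry_of_continuous_of_measurable (fun x => hcontt x) hmeasE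
  have hjoint2 : Measurable fun q : EuclideanSpace ℝ (Fin n) × ℝ => σt q.1 q.2 * q.2 := by
    have h1 : Measurable fun q : EuclideanSpace ℝ (Fin n) × ℝ => σt q.1 q.2 :=
      hjoint.comp measurable_swap
    exact h1.mul measurable_snd
  -- the primitive
  set Ψ : EuclideanSpace ℝ (Fin n) → ℝ → ℝ :=
    fun x E => ∫ ξ in (0:ℝ)..E, σt x ξ * ξ with hΨdef
  have hΨcont : ∀ x, Continuous (Ψ x) := fun x =>
    intervalIntegral.continuous_primitive
      (fun a b => ((hcontt x).mul continuous_id).intervalIntegrable a b) 0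
  have hΨmeasE : ∀ E : ℝ, Measurable fun x => Ψ x E := by
    intro E
    have h1 : StronglyMeasurable fun x => ∫ ξ in Ioc (0:ℝ) E, σt x ξ * ξ :=
      StronglyMeasurable.integral_prod_right (f := fun x ξ => σt x ξ * ξ)
        hjoint2.stronglyMeasurable
    have h2 : StronglyMeasurable fun x => ∫ ξ in Ioc E (0:ℝ), σt x ξ * ξ :=
      StronglyMeasurable.integral_prod_right (f := fun x ξ => σt x ξ * ξ)
        hjoint2.stronglyMeasurable
    have heq : (fun x => Ψ x E) =
        fun x => (∫ ξ in Ioc (0:ℝ) E, σt x ξ * ξ) - ∫ ξ in Ioc E (0:ℝ), σt x ξ * ξ := rfl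
    rw [heq]
    exact h1.measurable.sub h2.measurable
  have hΨjoint : Measurable (Function.uncurry fun (E : ℝ) (x : EuclideanSpace ℝ (Fin n)) => Ψ x E) :=
    measurable_uncurry_of_continuous_of_measurable (fun x => hΨcont x) hΨmeasE
  have hgrad : AEMeasurable (fun x => ‖gradient u x‖) μ := hu.1.norm.aemeasurable
  have hΦmeas : AEStronglyMeasurable (fun x => Ψ x ‖gradient u x‖) μ := by
    have h1 : AEMeasurable
        ((Function.uncurry fun (E : ℝ) (y : EuclideanSpace ℝ (Fin n)) => Ψ y E) ∘
          (fun x => (‖gradient u x‖, x))) μ :=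
      hΨjoint.comp_aemeasurable (hgrad.prodMk aemeasurable_id)
    exact h1.aestronglyMeasurable
  have hae_not_N : ∀ᵐ x ∂μ, x ∉ N := by
    rw [ae_iff]
    simpa using hNnull
  have hΦeq : (fun x => Ψ x ‖gradient u x‖) =ᵐ[μ]
      fun x => dirichletDensity σ₂ x ‖gradient u x‖ := by
    filter_upwards [hae_not_N] with x hx
    apply intervalIntegral.integral_congr
    intro ξ hξ
    rw [uIcc_of_le (norm_nonneg _)] at hξ
    simp [hσtdef, hx, max_eq_left hξ.1]
  have hQ₂meas : AEStronglyMeasurable (fun x => dirichletDensity σ₂ x ‖gradient u x‖) μ :=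
    hΦmeas.congr hΦeq
  -- the dominating function
  set h : EuclideanSpace ℝ (Fin n) → ℝ :=
    fun x => σu₂ * ‖gradient u x‖ ^ (2:ℝ) + (σu₂ / E₀ ^ (p-2)) * ‖gradient u x‖ ^ p with hhdef
  have hint2 : Integrable (fun x => ‖gradient u x‖ ^ (2:ℝ)) μ := by
    have h2 : MemLp (fun x => gradient u x) 2 μ := by
      refine hu.mono_exponent ?_
      calc (2:ℝ≥0∞) = ENNReal.ofReal 2 := by norm_num
        _ ≤ ENNReal.ofReal p := ENNReal.ofReal_le_ofReal hp
    have := h2.integrable_norm_rpow two_ne_zero ENNReal.ofNat_ne_top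
    simpa using this
  have hintp : Integrable (fun x => ‖gradient u x‖ ^ p) μ := by
    have h0 : ENNReal.ofReal p ≠ 0 := by
      simp only [ne_eq, ENNReal.ofReal_eq_zero, not_le]
      linarith
    have := hu.integrable_norm_rpow h0 ENNReal.ofReal_ne_top
    simpa [ENNReal.toReal_ofReal (by linarith : (0:ℝ) ≤ p)] using this
  have hhint : Integrable h μ := (hint2.const_mul σu₂).add (hintp.const_mul _)
  -- pointwise facts
  have key : ∀ᵐ x ∂μ,
      (0 ≤ dirichletDensity σ₁ x ‖gradient u x‖) ∧
      (0 ≤ dirichletDensity σ₂ x ‖gradient u x‖) ∧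
      dirichletDensity σ₁ x ‖gradient u x‖ ≤ dirichletDensity σ₂ x ‖gradient u x‖ ∧
      dirichletDensity σ₂ x ‖gradient u x‖ ≤ h x := by
    filter_upwards [hσ₁cont, hσ₂cont, hgr₁, hgr₂, hle] with x hc₁ hc₂ hg₁ hg₂ hl
    set E := ‖gradient u x‖ with hEdef
    have hE : 0 ≤ E := norm_nonneg _
    have hσu₂0 : 0 ≤ σu₂ := le_trans hσl₂.le hσlu₂
    have hnn₁ : ∀ ξ ∈ Icc (0:ℝ) E, 0 ≤ σ₁ x ξ * ξ := by
      intro ξ hξ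
      rcases eq_or_lt_of_le hξ.1 with h0 | h0
      · simp [← h0]
      · have := (hg₁ ξ h0).1
        have h1 : (0:ℝ) ≤ σl₁ * (ξ / E₁) ^ (p - 2) :=
          mul_nonneg hσl₁.le (Real.rpow_nonneg (div_nonneg h0.le hE₁.le) _)
        exact mul_nonneg (le_trans h1 this) h0.le
    have hnn₂ : ∀ ξ ∈ Icc (0:ℝ) E, 0 ≤ σ₂ x ξ * ξ := by
      intro ξ hξ
      rcases eq_or_lt_of_le hξ.1 with h0 | h0
      · simp [← h0]
      · have := (hg₂ ξ h0).1
        have h1 : (0:ℝ) ≤ σl₂ * (ξ / E₀) ^ (p - 2) :=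
          mul_nonneg hσl₂.le (Real.rpow_nonneg (div_nonneg h0.le hE₀.le) _)
        exact mul_nonneg (le_trans h1 this) h0.le
    have hi₁ : IntervalIntegrable (fun ξ => σ₁ x ξ * ξ) volume 0 E := by
      apply ContinuousOn.intervalIntegrable
      rw [uIcc_of_le hE]
      exact (hc₁.mono Icc_subset_Ici_self).mul continuousOn_id
    have hi₂ : IntervalIntegrable (fun ξ => σ₂ x ξ * ξ) volume 0 E := by
      apply ContinuousOn.intervalIntegrable
      rw [uIcc_of_le hE]
      exact (hc₂.mono Icc_subset_Ici_self).mul continuousOn_id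
    refine ⟨intervalIntegral.integral_nonneg hE hnn₁,
      intervalIntegral.integral_nonneg hE hnn₂, ?_, ?_⟩
    · exact intervalIntegral.integral_mono_on hE hi₁ hi₂ (fun ξ hξ => by
        rcases eq_or_lt_of_le hξ.1 with h0 | h0
        · simp [← h0]
        · exact mul_le_mul_of_nonneg_right (hl ξ h0) h0.le)
    · -- upper bound
      set M : ℝ := σu₂ * max 1 ((E / E₀) ^ (p - 2)) with hMdef
      have hM : 0 ≤ M := mul_nonneg hσu₂0 (le_trans zero_le_one (le_max_left _ _))
      have hub : ∀ ξ ∈ Icc (0:ℝ) E, σ₂ x ξ * ξ ≤ M * E := by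
        intro ξ hξ
        rcases eq_or_lt_of_le hξ.1 with h0 | h0
        · rw [← h0]
          simpa using mul_nonneg hM hE
        · have h1 : σ₂ x ξ ≤ σu₂ * max 1 ((ξ / E₀) ^ (p - 2)) := (hg₂ ξ h0).2
          have h2 : (ξ / E₀) ^ (p - 2) ≤ (E / E₀) ^ (p - 2) :=
            Real.rpow_le_rpow (div_nonneg h0.le hE₀.le)
              (by gcongr; exact hξ.2) (by linarith)
          have h3 : σ₂ x ξ ≤ M := by
            refine le_trans h1 ?_
            rw [hMdef]
            exact mul_le_mul_of_nonneg_left (max_le_max (le_refl (1:ℝ)) h2) hσu₂0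
          have h4 : 0 ≤ σ₂ x ξ := by
            refine le_trans ?_ (hg₂ ξ h0).1
            exact mul_nonneg hσl₂.le (Real.rpow_nonneg (div_nonneg h0.le hE₀.le) _)
          calc σ₂ x ξ * ξ ≤ M * ξ := mul_le_mul_of_nonneg_right h3 h0.le
            _ ≤ M * E := mul_le_mul_of_nonneg_left hξ.2 hM
      have hQle : dirichletDensity σ₂ x E ≤ ∫ ξ in (0:ℝ)..E, M * E :=
        intervalIntegral.integral_mono_on hE hi₂ intervalIntegrable_const hub
      have hconst : (∫ ξ in (0:ℝ)..E, M * E) = E * (M * E) := by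
        simp [intervalIntegral.integral_const, smul_eq_mul]; ring
      have ht0 : 0 ≤ (E/E₀)^(p-2) := Real.rpow_nonneg (div_nonneg hE hE₀.le) _
      have hmax : max 1 ((E/E₀)^(p-2)) ≤ 1 + (E/E₀)^(p-2) :=
        max_le (le_add_of_nonneg_right ht0) (le_add_of_nonneg_left zero_le_one)
      have hstep : E * (M * E) ≤ h x := by
        have hr := rpow_helper hE hE₀ hp
        have hEE : 0 ≤ E * E := mul_self_nonneg E
        have h2E : E ^ (2:ℝ) = E * E := by
          rw [show ((2:ℝ) = ((2:ℕ):ℝ)) by norm_num, Real.rpow_natCast]; ring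
        have hgoal : h x = σu₂ * (E * E) + σu₂ / E₀ ^ (p-2) * E ^ p := by
          rw [hhdef]
          simp only [← hEdef, h2E]
        rw [hgoal]
        calc E * (M * E) = σu₂ * max 1 ((E/E₀)^(p-2)) * (E * E) := by rw [hMdef]; ring
          _ ≤ σu₂ * (1 + (E/E₀)^(p-2)) * (E * E) :=
              mul_le_mul_of_nonneg_right (mul_le_mul_of_nonneg_left hmax hσu₂0) hEE
          _ = σu₂ * (E * E) + σu₂ * ((E/E₀)^(p-2) * (E * E)) := by ring
          _ = σu₂ * (E * E) + σu₂ * (E ^ p / E₀ ^ (p-2)) := by rw [hr]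
          _ = σu₂ * (E * E) + σu₂ / E₀ ^ (p-2) * E ^ p := by ring
      calc dirichletDensity σ₂ x E ≤ E * (M * E) := hconst ▸ hQle
        _ ≤ h x := hstep
  have hQ₂int : Integrable (fun x => dirichletDensity σ₂ x ‖gradient u x‖) μ := by
    refine hhint.mono' hQ₂meas ?_
    filter_upwards [key] with x hx
    rw [Real.norm_eq_abs, abs_of_nonneg hx.2.1]
    exact hx.2.2.2
  exact integral_mono_of_nonneg (key.mono fun x hx => hx.1) hQ₂int (key.mono fun x hx => hx.2.2.1)

lemma gradient_add_one_mul {n : ℕ} (v φ : EuclideanSpace ℝ (Fin n) → ℝ)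
    (hv : Differentiable ℝ v) (hφ : Differentiable ℝ φ) (x : EuclideanSpace ℝ (Fin n)) :
    gradient (fun y => v y + 1 * φ y) x = gradient v x + gradient φ x := by
  simp only [one_mul]
  unfold gradient
  rw [fderiv_fun_add (hv x) (hφ x), map_add]

/-- **Monotonicity Principle for the Average Dirichlet-to-Neumann operator**
(Theorem 4.3): `σ₁ ≤ σ₂` implies `⟨Λ̄_{σ₁}(f), f⟩ ≤ ⟨Λ̄_{σ₂}(f), f⟩`, i.e.
`∫₀¹ P₁(α) dα ≤ ∫₀¹ P₂(α) dα`. -/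
theorem monotonicity_average_DtN
    {n : ℕ} (Ω : Set (EuclideanSpace ℝ (Fin n)))
    (hΩo : IsOpen Ω) (hΩb : Bornology.IsBounded Ω)
    (p : ℝ) (hp : 2 ≤ p)
    (σ₁ σ₂ : EuclideanSpace ℝ (Fin n) → ℝ → ℝ)
    -- (H1)
    (hσ₁meas : ∀ E : ℝ, 0 ≤ E → AEMeasurable (fun x => σ₁ x E) (volume.restrict Ω))
    (hσ₂meas : ∀ E : ℝ, 0 ≤ E → AEMeasurable (fun x => σ₂ x E) (volume.restrict Ω))
    -- (H2)
    (hσ₁mono : ∀ᵐ x ∂(volume.restrict Ω), StrictMonoOn (fun E => σ₁ x E * E) (Set.Ioi 0))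
    (hσ₂mono : ∀ᵐ x ∂(volume.restrict Ω), StrictMonoOn (fun E => σ₂ x E * E) (Set.Ioi 0))
    -- (H3)
    (hσ₁cont : ∀ᵐ x ∂(volume.restrict Ω), ContinuousOn (fun E => σ₁ x E) (Set.Ici 0))
    (hσ₂cont : ∀ᵐ x ∂(volume.restrict Ω), ContinuousOn (fun E => σ₂ x E) (Set.Ici 0))
    -- (H4)
    (hσ₁growth : ∃ σl σu E₀ : ℝ, 0 < σl ∧ σl ≤ σu ∧ 0 < E₀ ∧
      ∀ᵐ x ∂(volume.restrict Ω), ∀ E > (0:ℝ),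
        σl * (E / E₀) ^ (p - 2) ≤ σ₁ x E ∧ σ₁ x E ≤ σu * max 1 ((E / E₀) ^ (p - 2)))
    (hσ₂growth : ∃ σl σu E₀ : ℝ, 0 < σl ∧ σl ≤ σu ∧ 0 < E₀ ∧
      ∀ᵐ x ∂(volume.restrict Ω), ∀ E > (0:ℝ),
        σl * (E / E₀) ^ (p - 2) ≤ σ₂ x E ∧ σ₂ x E ≤ σu * max 1 ((E / E₀) ^ (p - 2)))
    -- σ₁ ≤ σ₂
    (hle : ∀ᵐ x ∂(volume.restrict Ω), ∀ E > (0:ℝ), σ₁ x E ≤ σ₂ x E)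
    -- the extension φ_f of the boundary datum f
    (φf : EuclideanSpace ℝ (Fin n) → ℝ) (hφf : Differentiable ℝ φf)
    (hφfLp : MemLp (fun x => gradient φf x) (ENNReal.ofReal p) (volume.restrict Ω))
    -- the admissible class
    (A : Set (EuclideanSpace ℝ (Fin n) → ℝ))
    (hA : ∀ v ∈ A, Differentiable ℝ v ∧
      MemLp (fun x => gradient v x) (ENNReal.ofReal p) (volume.restrict Ω))
    -- for each α ∈ [0,1], u_i^α minimizes F_{σ_i} over A_α = {v + α·φ_f : v ∈ A}
    (u₁ u₂ : ℝ → EuclideanSpace ℝ (Fin n) → ℝ)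
    (hmin₁ : ∀ α ∈ Set.Icc (0:ℝ) 1,
      (∃ v ∈ A, u₁ α = fun x => v x + α * φf x) ∧
      ∀ w, (∃ v ∈ A, w = fun x => v x + α * φf x) →
        dirichletEnergy Ω σ₁ (u₁ α) ≤ dirichletEnergy Ω σ₁ w)
    (hmin₂ : ∀ α ∈ Set.Icc (0:ℝ) 1,
      (∃ v ∈ A, u₂ α = fun x => v x + α * φf x) ∧
      ∀ w, (∃ v ∈ A, w = fun x => v x + α * φf x) →
        dirichletEnergy Ω σ₂ (u₂ α) ≤ dirichletEnergy Ω σ₂ w)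
    -- (i) the energy vanishes at α = 0
    (hF0₁ : dirichletEnergy Ω σ₁ (u₁ 0) = 0)
    (hF0₂ : dirichletEnergy Ω σ₂ (u₂ 0) = 0)
    -- (ii) g_i(α) = F_{σᵢ}(u_i^α) is differentiable with derivative P_i(α)
    (hg₁ : ∀ α ∈ Set.Icc (0:ℝ) 1,
      HasDerivAt (fun β => dirichletEnergy Ω σ₁ (u₁ β)) (powerProduct Ω σ₁ φf (u₁ α)) α)
    (hg₂ : ∀ α ∈ Set.Icc (0:ℝ) 1,
      HasDerivAt (fun β => dirichletEnergy Ω σ₂ (u₂ β)) (powerProduct Ω σ₂ φf (u₂ α)) α)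
    -- P_i interval-integrable on [0,1]
    (hint₁ : IntervalIntegrable (fun α => powerProduct Ω σ₁ φf (u₁ α)) volume 0 1)
    (hint₂ : IntervalIntegrable (fun α => powerProduct Ω σ₂ φf (u₂ α)) volume 0 1) :
    (∫ α in (0:ℝ)..1, powerProduct Ω σ₁ φf (u₁ α))
      ≤ ∫ α in (0:ℝ)..1, powerProduct Ω σ₂ φf (u₂ α) := by
  have h11 : (1:ℝ) ∈ Set.Icc (0:ℝ) 1 := ⟨zero_le_one, le_refl 1⟩
  have ftc₁ : (∫ α in (0:ℝ)..1, powerProduct Ω σ₁ φf (u₁ α)) =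
      dirichletEnergy Ω σ₁ (u₁ 1) - dirichletEnergy Ω σ₁ (u₁ 0) :=
    intervalIntegral.integral_eq_sub_of_hasDerivAt
      (fun t ht => hg₁ t (by rwa [uIcc_of_le zero_le_one] at ht)) hint₁
  have ftc₂ : (∫ α in (0:ℝ)..1, powerProduct Ω σ₂ φf (u₂ α)) =
      dirichletEnergy Ω σ₂ (u₂ 1) - dirichletEnergy Ω σ₂ (u₂ 0) :=
    intervalIntegral.integral_eq_sub_of_hasDerivAt
      (fun t ht => hg₂ t (by rwa [uIcc_of_le zero_le_one] at ht)) hint₂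
  rw [ftc₁, ftc₂, hF0₁, hF0₂, sub_zero, sub_zero]
  obtain ⟨hmem₂, hopt₂⟩ := hmin₂ 1 h11
  obtain ⟨hmem₁, hopt₁⟩ := hmin₁ 1 h11
  have step1 : dirichletEnergy Ω σ₁ (u₁ 1) ≤ dirichletEnergy Ω σ₁ (u₂ 1) := hopt₁ (u₂ 1) hmem₂
  refine le_trans step1 ?_
  obtain ⟨v, hvA, hveq⟩ := hmem₂
  obtain ⟨hvdiff, hvLp⟩ := hA v hvA
  have hu2Lp : MemLp (fun x => gradient (u₂ 1) x) (ENNReal.ofReal p) (volume.restrict Ω) := by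
    have hsum : MemLp ((fun x => gradient v x) + fun x => gradient φf x)
        (ENNReal.ofReal p) (volume.restrict Ω) := hvLp.add hφfLp
    have heq : (fun x => gradient (u₂ 1) x) =
        ((fun x => gradient v x) + fun x => gradient φf x) := by
      funext x
      rw [hveq]
      exact gradient_add_one_mul v φf hvdiff hφf x
    rw [heq]
    exact hsum
  exact energy_mono Ω hΩb p hp σ₁ σ₂ hσ₂meas hσ₁cont hσ₂cont hσ₁growth hσ₂growth hle (u₂ 1) hu2Lp
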